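/- For any two lines ℓ and m (2-dimensional real subspaces of ℍ) there exist unit quaternions a and b such that m = {a * q * b : q ∈ ℓ}. (Thus the group PSO(4,ℝ) of maps q ↦ a q b acts transitively on the set of lines of PG(3,ℝ).) -/

import Mathlib

open Quaternion

/-- Scaling one generator of a pair by a nonzero scalar does not change the span. -/
lemma span_pair_smul_right {ε : ℝ} (hε : ε ≠ 0) (x y : ℍ[ℝ]) :
    Submodule.span ℝ {x, ε • y} = Submodule.span ℝ {x, y} := by
  apply le_antisymm <;> rw [Submodule.span_le] <;> rintro q (rfl | rfl)
  · exact Submodule.subset_span (Or.inl rfl)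
  · exact Submodule.smul_mem _ ε (Submodule.subset_span (Or.inr rfl))
  · exact Submodule.subset_span (Or.inl rfl)
  · have h := Submodule.smul_mem (Submodule.span ℝ {x, ε • q}) ε⁻¹
      (Submodule.subset_span (Or.inr rfl))
    rwa [smul_smul, inv_mul_cancel₀ hε, one_smul] at h

/-- Every 2-dimensional subspace of ℍ is `span {u, w * u}` for a unit quaternion `u`
and a pure unit quaternion `w`. -/
lemma plane_normal_form (ℓ : Submodule ℝ ℍ[ℝ]) (hℓ : Module.finrank ℝ ℓ = 2) :
    ∃ u w : ℍ[ℝ], ‖u‖ = 1 ∧ ‖w‖ = 1 ∧ w.re = 0 ∧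
      ℓ = Submodule.span ℝ {u, w * u} := by
  have : FiniteDimensional ℝ ℓ := FiniteDimensional.of_finrank_pos (by omega)
  let e : OrthonormalBasis (Fin 2) ℝ ℓ :=
    (stdOrthonormalBasis ℝ ℓ).reindex (finCongr hℓ)
  set u : ℍ[ℝ] := (e 0 : ℍ[ℝ]) with hu_def
  set v : ℍ[ℝ] := (e 1 : ℍ[ℝ]) with hv_def
  have hnu : ‖u‖ = 1 := e.orthonormal.1 0
  have hnv : ‖v‖ = 1 := e.orthonormal.1 1
  have hinner : (inner ℝ v u : ℝ) = 0 := by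
    have h2 := e.orthonormal.2 (i := 1) (j := 0) (by decide)
    rw [← ℓ.coe_inner]
    exact h2
  refine ⟨u, v * star u, hnu, ?_, ?_, ?_⟩
  · rw [norm_mul, Quaternion.norm_star, hnu, hnv, mul_one]
  · rw [← Quaternion.inner_def]; exact hinner
  · have husu : star u * u = 1 := by
      have := Quaternion.star_mul_self u
      rw [this, normSq_eq_norm_mul_self, hnu, mul_one, coe_one]
    have hvu : v * star u * u = v := by rw [mul_assoc, husu, mul_one]
    rw [hvu]
    have hrange : Set.range (fun i => (e i : ℍ[ℝ])) = {u, v} := by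
      ext x
      constructor
      · rintro ⟨i, rfl⟩
        fin_cases i
        · exact Or.inl rfl
        · exact Or.inr rfl
      · rintro (rfl | rfl)
        exacts [⟨0, rfl⟩, ⟨1, rfl⟩]
    calc ℓ = Submodule.map ℓ.subtype ⊤ := (Submodule.map_subtype_top ℓ).symm
      _ = Submodule.map ℓ.subtype (Submodule.span ℝ (Set.range e)) := by
          rw [← e.toBasis.span_eq, e.coe_toBasis]
      _ = Submodule.span ℝ (ℓ.subtype '' Set.range e) := Submodule.map_span _ _
      _ = Submodule.span ℝ {u, v} := by
          rw [← Set.range_comp]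
          exact congrArg _ hrange

/-- For any two lines `ℓ`, `m` (2-dimensional real subspaces of ℍ) there are unit
quaternions `a`, `b` with `m = {a * q * b : q ∈ ℓ}`: the group PSO(4,ℝ) of maps
`q ↦ a * q * b` acts transitively on the lines of PG(3,ℝ). -/
theorem pso4_transitive_on_lines (ℓ m : Submodule ℝ ℍ[ℝ])
    (hℓ : Module.finrank ℝ ℓ = 2) (hm : Module.finrank ℝ m = 2) :
    ∃ a b : ℍ[ℝ], ‖a‖ = 1 ∧ ‖b‖ = 1 ∧
      (m : Set ℍ[ℝ]) = (fun q => a * q * b) '' (ℓ : Set ℍ[ℝ]) := by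
  obtain ⟨u, w, hu, hw, hwre, hℓeq⟩ := plane_normal_form ℓ hℓ
  obtain ⟨p, z, hp, hz, hzre, hmeq⟩ := plane_normal_form m hm
  -- pure unit quaternions square to -1
  have sq_neg_one : ∀ x : ℍ[ℝ], ‖x‖ = 1 → x.re = 0 → x * x = -1 := by
    intro x hx hxre
    have h := Quaternion.sq_eq_neg_normSq.mpr hxre
    rw [sq] at h
    rw [h, normSq_eq_norm_mul_self, hx, mul_one, coe_one]
  have hww : w * w = -1 := sq_neg_one w hw hwre
  have hzz : z * z = -1 := sq_neg_one z hz hzre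
  -- find c ≠ 0 and ε = ±1 with c * w = ε • (z * c)
  obtain ⟨c, ε, hc, hε, hcw⟩ :
      ∃ (c : ℍ[ℝ]) (ε : ℝ), c ≠ 0 ∧ (ε = 1 ∨ ε = -1) ∧ c * w = ε • (z * c) := by
    by_cases hwz : w = -z
    · refine ⟨1, -1, one_ne_zero, Or.inr rfl, ?_⟩
      rw [one_mul, mul_one, hwz, neg_smul, one_smul]
    · refine ⟨1 - z * w, 1, ?_, Or.inl rfl, ?_⟩
      · intro h0
        have hzw : z * w = 1 := by
          have := sub_eq_zero.mp h0
          exact this.symm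
        apply hwz
        calc w = -(z * z) * w := by rw [hzz, neg_neg, one_mul]
          _ = -z * (z * w) := by noncomm_ring
          _ = -z := by rw [hzw, mul_one]
      · have l1 : (1 - z * w) * w = w + z := by
          rw [sub_mul, one_mul, mul_assoc, hww]
          noncomm_ring
        have l2 : z * (1 - z * w) = z + w := by
          rw [mul_sub, mul_one, ← mul_assoc, hzz]
          noncomm_ring
        rw [one_smul, l1, l2, add_comm]
  have hnc : ‖c‖ ≠ 0 := norm_ne_zero_iff.mpr hc
  have hnsq : normSq c ≠ 0 := by
    rw [normSq_eq_norm_mul_self]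
    exact mul_ne_zero hnc hnc
  -- the transformation
  refine ⟨‖c‖⁻¹ • c, ‖c‖⁻¹ • (star u * star c * p), ?_, ?_, ?_⟩
  · rw [norm_smul, norm_inv, norm_norm, inv_mul_cancel₀ hnc]
  · rw [norm_smul, norm_inv, norm_norm, norm_mul, norm_mul, Quaternion.norm_star,
      Quaternion.norm_star, hu, hp, one_mul, mul_one, inv_mul_cancel₀ hnc]
  set a : ℍ[ℝ] := ‖c‖⁻¹ • c with ha_def
  set b : ℍ[ℝ] := ‖c‖⁻¹ • (star u * star c * p) with hb_def
  have husu : u * star u = 1 := by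
    rw [Quaternion.self_mul_star, normSq_eq_norm_mul_self, hu, mul_one, coe_one]
  have key : ∀ q : ℍ[ℝ], a * q * b = (normSq c)⁻¹ • (c * q * (star u * star c * p)) := by
    intro q
    rw [ha_def, hb_def, smul_mul_assoc, smul_mul_assoc, mul_smul_comm, smul_smul,
      normSq_eq_norm_mul_self, mul_inv]
  have hTu : a * u * b = p := by
    rw [key u]
    have h1 : c * u * (star u * star c * p) = normSq c • p := by
      calc c * u * (star u * star c * p) = c * (u * star u) * star c * p := by noncomm_ring
        _ = c * star c * p := by rw [husu, mul_one]
        _ = normSq c • p := by rw [Quaternion.self_mul_star, Quaternion.coe_mul_eq_smul]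
    rw [h1, smul_smul, inv_mul_cancel₀ hnsq, one_smul]
  have hTwu : a * (w * u) * b = ε • (z * p) := by
    rw [key (w * u)]
    have h1 : c * (w * u) * (star u * star c * p) = ε • (normSq c • (z * p)) := by
      calc c * (w * u) * (star u * star c * p)
          = (c * w) * (u * star u) * star c * p := by noncomm_ring
        _ = (c * w) * star c * p := by rw [husu, mul_one]
        _ = (ε • (z * c)) * star c * p := by rw [hcw]
        _ = ε • (z * (c * star c) * p) := by
            rw [smul_mul_assoc, smul_mul_assoc, mul_assoc z c (star c)]
        _ = ε • (normSq c • (z * p)) := by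
            rw [Quaternion.self_mul_star, Quaternion.mul_coe_eq_smul, smul_mul_assoc]
    rw [h1, smul_comm ((normSq c)⁻¹) ε, smul_smul ((normSq c)⁻¹) (normSq c),
      inv_mul_cancel₀ hnsq, one_smul]
  have hε0 : ε ≠ 0 := by rcases hε with rfl | rfl <;> norm_num
  -- the linear map
  set T : ℍ[ℝ] →ₗ[ℝ] ℍ[ℝ] := (LinearMap.mulRight ℝ b).comp (LinearMap.mulLeft ℝ a) with hT_def
  have hTfun : (fun q : ℍ[ℝ] => a * q * b) = ⇑T := by
    funext q
    simp [hT_def, LinearMap.mulRight_apply, LinearMap.mulLeft_apply]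
  rw [hℓeq, hmeq, hTfun]
  rw [show (⇑T '' ↑(Submodule.span ℝ {u, w * u}) : Set ℍ[ℝ])
      = ↑(Submodule.map T (Submodule.span ℝ {u, w * u})) from rfl]
  rw [Submodule.map_span, Set.image_pair]
  have hTu' : T u = p := hTu
  have hTwu' : T (w * u) = ε • (z * p) := hTwu
  rw [hTu', hTwu', span_pair_smul_right hε0]
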